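/- Suppose a sequence of N rounds is partitioned into C consecutive blocks (concepts), and within each block c the perceptron's number of mistakes is at most 2√K · W_c + K(K+1), where W_c denotes the norm of the weight vector at the start of block c, with W_1 = 0 and W_{c+1} ≤ W_c + M_c·√(K+1) where M_c is the number of mistakes in block c. Then the total number of mistakes over all N rounds is bounded by a constant depending only on K and C (independent of N), and hence the fraction of mistakes tends to 0 as N → ∞ with C, K fixed. -/

import Mathlib

noncomputable def auxW (K : ℕ) : ℕ → ℝ
  | 0 => 0
  | n + 1 => auxW K n + (2 * Real.sqrt K * auxW K n + K * ((K : ℝ) + 1)) * Real.sqrt ((K : ℝ) + 1)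

/-- Bounded-mistake argument for finitely many learnable concepts: the total number of
mistakes is bounded by a constant depending only on K and C, so the mistake fraction
over N rounds tends to 0. -/
theorem stmt13 :
    ∃ B : ℕ → ℕ → ℝ,
      ∀ (K C : ℕ), 1 ≤ K → 1 ≤ C →
      ∀ (W M : ℕ → ℝ),
        (∀ c, 0 ≤ M c) →
        W 1 = 0 →
        (∀ c, 1 ≤ c → c ≤ C → M c ≤ 2 * Real.sqrt K * W c + K * ((K : ℝ) + 1)) →
        (∀ c, 1 ≤ c → c ≤ C → W (c + 1) ≤ W c + M c * Real.sqrt ((K : ℝ) + 1)) →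
        (∑ c ∈ Finset.Icc 1 C, M c) ≤ B K C ∧
        Filter.Tendsto (fun N : ℕ => (∑ c ∈ Finset.Icc 1 C, M c) / N)
          Filter.atTop (nhds 0) := by
  refine ⟨fun K C => ∑ c ∈ Finset.Icc 1 C, (2 * Real.sqrt K * auxW K (c - 1) + K * ((K : ℝ) + 1)),
    fun K C hK hC W M hM hW1 hMb hWb => ?_⟩
  have hsqK : (0 : ℝ) ≤ 2 * Real.sqrt K := by positivity
  have hsqK1 : (0 : ℝ) ≤ Real.sqrt ((K : ℝ) + 1) := Real.sqrt_nonneg _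
  -- key induction: W c ≤ auxW K (c-1) for 1 ≤ c ≤ C
  have key : ∀ c, 1 ≤ c → c ≤ C → W c ≤ auxW K (c - 1) := by
    intro c hc
    induction c, hc using Nat.le_induction with
    | base => intro _; simpa [auxW] using hW1.le
    | succ c hc ih =>
      intro hcC
      have hcC' : c ≤ C := le_trans (Nat.le_succ c) hcC
      have hWc : W c ≤ auxW K (c - 1) := ih hcC'
      have hMc : M c ≤ 2 * Real.sqrt K * auxW K (c - 1) + K * ((K : ℝ) + 1) :=
        le_trans (hMb c hc hcC') (by
          have := mul_le_mul_of_nonneg_left hWc hsqK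
          linarith)
      have := hWb c hc hcC'
      have h2 : M c * Real.sqrt ((K : ℝ) + 1) ≤
          (2 * Real.sqrt K * auxW K (c - 1) + K * ((K : ℝ) + 1)) * Real.sqrt ((K : ℝ) + 1) :=
        mul_le_mul_of_nonneg_right hMc hsqK1
      have hc1 : c + 1 - 1 = (c - 1) + 1 := by omega
      rw [hc1, auxW]
      linarith
  have hsum : (∑ c ∈ Finset.Icc 1 C, M c) ≤
      ∑ c ∈ Finset.Icc 1 C, (2 * Real.sqrt K * auxW K (c - 1) + K * ((K : ℝ) + 1)) := by
    refine Finset.sum_le_sum fun c hc => ?_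
    simp only [Finset.mem_Icc] at hc
    refine le_trans (hMb c hc.1 hc.2) ?_
    have := mul_le_mul_of_nonneg_left (key c hc.1 hc.2) hsqK
    linarith
  refine ⟨hsum, ?_⟩
  exact tendsto_const_div_atTop_nhds_zero_nat _
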